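/- Let μ₁, μ₂ ≥ 1 and suppose α : Fin μ₁ → ℝ and β : Fin μ₂ → ℝ are nondecreasing families satisfying the variance identities (1/μ₁)∑_i (α(i) - c₁)² = (α_max - α_min)/12 and (1/μ₂)∑_j (β(j) - c₂)² = (β_max - β_min)/12, where c₁, c₂ are the respective means. Then the family γ(i,j) := α(i) + β(j) + 1 (of size μ₁μ₂, with mean c₁ + c₂ + 1, maximum α_max + β_max + 1 and minimum α_min + β_min + 1) satisfies (1/(μ₁μ₂))∑_{i,j} (γ(i,j) - (c₁+c₂+1))² = (γ_max - γ_min)/12. -/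

import Mathlib

/-- The variance identity Var = (max - min)/12 is preserved under the
Thom–Sebastiani join γ(i,j) = α(i) + β(j) + 1. -/
theorem variance_identity_join (μ₁ μ₂ : ℕ) (h₁ : 1 ≤ μ₁) (h₂ : 1 ≤ μ₂)
    (α : Fin μ₁ → ℝ) (β : Fin μ₂ → ℝ) (c₁ c₂ : ℝ)
    (hmα : Monotone α) (hmβ : Monotone β)
    (hc₁ : ∑ i, α i = μ₁ * c₁) (hc₂ : ∑ j, β j = μ₂ * c₂)
    (hvarα : (1 / (μ₁ : ℝ)) * ∑ i, (α i - c₁) ^ 2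
      = (α ⟨μ₁ - 1, by omega⟩ - α ⟨0, by omega⟩) / 12)
    (hvarβ : (1 / (μ₂ : ℝ)) * ∑ j, (β j - c₂) ^ 2
      = (β ⟨μ₂ - 1, by omega⟩ - β ⟨0, by omega⟩) / 12) :
    (1 / ((μ₁ : ℝ) * μ₂)) * ∑ p : Fin μ₁ × Fin μ₂,
        (α p.1 + β p.2 + 1 - (c₁ + c₂ + 1)) ^ 2
      = ((α ⟨μ₁ - 1, by omega⟩ + β ⟨μ₂ - 1, by omega⟩ + 1)
          - (α ⟨0, by omega⟩ + β ⟨0, by omega⟩ + 1)) / 12 := by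
  have hμ₁ : (μ₁ : ℝ) ≠ 0 := by positivity
  have hμ₂ : (μ₂ : ℝ) ≠ 0 := by positivity
  have hA : ∑ i, (α i - c₁) = 0 := by
    rw [Finset.sum_sub_distrib, hc₁]; simp
  have hB : ∑ j, (β j - c₂) = 0 := by
    rw [Finset.sum_sub_distrib, hc₂]; simp
  have key : ∑ p : Fin μ₁ × Fin μ₂, (α p.1 + β p.2 + 1 - (c₁ + c₂ + 1)) ^ 2
      = (μ₂ : ℝ) * ∑ i, (α i - c₁) ^ 2 + (μ₁ : ℝ) * ∑ j, (β j - c₂) ^ 2 := by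
    rw [Fintype.sum_prod_type]
    have : ∀ i : Fin μ₁, ∑ j, (α i + β j + 1 - (c₁ + c₂ + 1)) ^ 2
        = (μ₂ : ℝ) * (α i - c₁) ^ 2 + 2 * (α i - c₁) * ∑ j, (β j - c₂)
          + ∑ j, (β j - c₂) ^ 2 := by
      intro i
      have step : ∑ j, (α i + β j + 1 - (c₁ + c₂ + 1)) ^ 2
          = ∑ j, ((α i - c₁) ^ 2 + 2 * (α i - c₁) * (β j - c₂) + (β j - c₂) ^ 2) :=
        Finset.sum_congr rfl (fun j _ => by ring)
      rw [step, Finset.sum_add_distrib, Finset.sum_add_distrib, Finset.sum_const,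
        ← Finset.mul_sum]
      simp [mul_comm]
    simp only [this, hB]
    rw [Finset.sum_add_distrib, Finset.sum_add_distrib]
    simp [Finset.mul_sum]
  rw [key, mul_add]
  have e1 : 1 / ((μ₁ : ℝ) * μ₂) * ((μ₂ : ℝ) * ∑ i, (α i - c₁) ^ 2)
      = 1 / (μ₁ : ℝ) * ∑ i, (α i - c₁) ^ 2 := by
    field_simp
  have e2 : 1 / ((μ₁ : ℝ) * μ₂) * ((μ₁ : ℝ) * ∑ j, (β j - c₂) ^ 2)
      = 1 / (μ₂ : ℝ) * ∑ j, (β j - c₂) ^ 2 := by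
    field_simp
  rw [e1, e2, hvarα, hvarβ]
  ring
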